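/- Let n, k ≥ 1, consider the k-nearest neighbor platoon P(n,k), let S ⊆ {1,…,n} be a nonempty set of reference vehicles with F = {1,…,n} \ S nonempty, let L_g be the grounded Laplacian, and let B = I_{|F|} ⊗ B1 + L_g ⊗ B2 with B1 = [[0,1],[0,0]] and B2 = [[0,0],[−1,−1]]. Then the spectral radius of B is at most 4k: every complex eigenvalue μ of B satisfies |μ| ≤ 4k. Consequently, for any delay τ with 0 ≤ τ < 1/(4k), one has τ·|μ| < 1 for every eigenvalue μ of B. -/

import Mathlib

open scoped Kronecker Matrix

/-- The `k`-nearest neighbor platoon `P(n,k)`: the graph on `{1,…,n}` (modeled as `Fin n`)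
in which distinct vertices `i, j` are adjacent iff `|i − j| ≤ k`. -/
def platoon (n k : ℕ) : SimpleGraph (Fin n) where
  Adj i j := i ≠ j ∧ ((i : ℤ) - (j : ℤ)).natAbs ≤ k
  symm := ⟨by
    intro i j h
    exact ⟨h.1.symm, by omega⟩⟩
  loopless := ⟨fun i h => h.1 rfl⟩

instance (n k : ℕ) : DecidableRel (platoon n k).Adj :=
  fun i j => inferInstanceAs (Decidable (i ≠ j ∧ ((i : ℤ) - (j : ℤ)).natAbs ≤ k))

/-- The grounded Laplacian: the principal submatrix of the Laplacian of `G`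
obtained by deleting the rows and columns indexed by the grounded set `S`. -/
noncomputable def groundedLaplacian {V : Type*} [Fintype V] [DecidableEq V]
    (G : SimpleGraph V) [DecidableRel G.Adj] (S : Finset V) :
    Matrix {v : V // v ∉ S} {v : V // v ∉ S} ℝ :=
  (G.lapMatrix ℝ).submatrix (fun i => (i : V)) (fun j => (j : V))

/-- The network formation dynamics matrix `B = I ⊗ B₁ + L_g ⊗ B₂` with unit control
gains, where `B₁ = [[0,1],[0,0]]` and `B₂ = [[0,0],[−1,−1]]`. -/
noncomputable def formationMatrix {F : Type*} [Fintype F] [DecidableEq F]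
    (Lg : Matrix F F ℝ) : Matrix (F × Fin 2) (F × Fin 2) ℝ :=
  (1 : Matrix F F ℝ) ⊗ₖ !![0, 1; 0, 0] + Lg ⊗ₖ !![0, 0; -1, -1]

/-! ### Auxiliary lemmas -/

open Matrix in
lemma exists_eigvec {m : Type*} [Fintype m] [DecidableEq m]
    (A : Matrix m m ℂ) (μ : ℂ) (h : μ ∈ spectrum ℂ A) :
    ∃ v : m → ℂ, v ≠ 0 ∧ A *ᵥ v = μ • v := by
  rw [spectrum.mem_iff] at h
  have hdet : ((algebraMap ℂ (Matrix m m ℂ) μ) - A).det = 0 := by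
    by_contra hd
    exact h ((Matrix.isUnit_iff_isUnit_det _).2 (isUnit_iff_ne_zero.2 hd))
  obtain ⟨v, hv, h0⟩ := (Matrix.exists_mulVec_eq_zero_iff).2 hdet
  refine ⟨v, hv, ?_⟩
  have h1 : (algebraMap ℂ (Matrix m m ℂ) μ) *ᵥ v - A *ᵥ v = 0 := by
    rw [← Matrix.sub_mulVec]; exact h0
  have h2 : (algebraMap ℂ (Matrix m m ℂ) μ) *ᵥ v = μ • v := by
    rw [Matrix.algebraMap_eq_diagonal]
    ext i
    simp [Matrix.mulVec_diagonal]
  rw [h2, sub_eq_zero] at h1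
  exact h1.symm

lemma scalar_bound (c lam : ℝ) (μ : ℂ) (hc : 4 ≤ c) (h0 : 0 ≤ lam) (h1 : lam ≤ c)
    (heq : μ^2 + lam * μ + lam = 0) : ‖μ‖ ≤ c := by
  set a := μ.re with ha
  set b := μ.im with hb
  have hre : a^2 - b^2 + lam * a + lam = 0 := by
    have := congrArg Complex.re heq
    simpa [pow_two, Complex.add_re, Complex.mul_re, Complex.mul_im] using this
  have him : 2 * a * b + lam * b = 0 := by
    have := congrArg Complex.im heq
    simp [pow_two, Complex.add_im, Complex.mul_re, Complex.mul_im] at this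
    nlinarith [this]
  have hsq : a^2 + b^2 ≤ c^2 := by
    rcases eq_or_ne b 0 with hb0 | hb0
    · have hre' : a^2 + lam * a + lam = 0 := by rw [hb0] at hre; linarith
      have h2 : a ≤ c := by nlinarith [hre', mul_nonneg h0 (sub_nonneg.2 h1)]
      have h3 : -c ≤ a := by nlinarith [hre', sub_nonneg.2 h1]
      rw [hb0]
      nlinarith [h2, h3]
    · have ha2 : 2 * a + lam = 0 := by
        have : b * (2 * a + lam) = 0 := by ring_nf; linarith [him]
        rcases mul_eq_zero.1 this with h | h
        · exact absurd h hb0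
        · exact h
      nlinarith [hre, ha2]
  have habs : ‖μ‖ ^ 2 = a^2 + b^2 := by
    rw [Complex.sq_norm, Complex.normSq_apply]; ring
  nlinarith [norm_nonneg μ, habs, hsq]

open Matrix Complex in
lemma real_psd_eig {F : Type*} [Fintype F] [DecidableEq F]
    (M : Matrix F F ℝ) (hsym : ∀ i j, M j i = M i j) (hpsd : M.PosSemidef) (C : ℝ)
    (hrow : ∀ i, ∑ j, |M i j| ≤ C)
    (l : ℂ) (x : F → ℂ) (hx : x ≠ 0) (hev : (M.map Complex.ofReal) *ᵥ x = l • x) :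
    ∃ r : ℝ, l = (r : ℂ) ∧ 0 ≤ r ∧ r ≤ C := by
  classical
  set u : F → ℝ := fun i => (x i).re with hu
  set v : F → ℝ := fun i => (x i).im with hv
  set N : ℝ := ∑ i, Complex.normSq (x i) with hN
  obtain ⟨i1, hi1⟩ := Function.ne_iff.1 hx
  have hNpos : 0 < N := by
    have : 0 < Complex.normSq (x i1) := by
      simpa [Complex.normSq_pos] using hi1
    exact Finset.sum_pos' (fun j _ => Complex.normSq_nonneg _) ⟨i1, Finset.mem_univ i1, this⟩
  set D : ℂ := dotProduct (star x) ((M.map Complex.ofReal) *ᵥ x) with hD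
  have hxx : dotProduct (star x) x = (N : ℂ) := by
    simp only [dotProduct, Pi.star_apply, RCLike.star_def, hN]
    rw [Complex.ofReal_sum]
    refine Finset.sum_congr rfl fun i _ => ?_
    rw [Complex.normSq_eq_conj_mul_self]
  have hD1 : D = l * (N : ℂ) := by
    rw [hD, hev, dotProduct_smul, hxx, smul_eq_mul]
  have hD2 : D = ∑ i, ∑ j, (M i j : ℂ) * ((starRingEnd ℂ) (x i) * x j) := by
    rw [hD]
    simp only [dotProduct, mulVec, Pi.star_apply, RCLike.star_def, Matrix.map_apply,
      Finset.mul_sum]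
    refine Finset.sum_congr rfl fun i _ => Finset.sum_congr rfl fun j _ => by ring
  have hDre : D.re = (∑ i, ∑ j, M i j * (u i * u j)) + ∑ i, ∑ j, M i j * (v i * v j) := by
    rw [hD2, Complex.re_sum, ← Finset.sum_add_distrib]
    refine Finset.sum_congr rfl fun i _ => ?_
    rw [Complex.re_sum, ← Finset.sum_add_distrib]
    refine Finset.sum_congr rfl fun j _ => ?_
    simp only [Complex.mul_re, Complex.mul_im, Complex.ofReal_re, Complex.ofReal_im,
      Complex.conj_re, Complex.conj_im, hu, hv]
    ring
  have hDim : D.im = 0 := by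
    have h1 : D.im = ∑ i, ∑ j, M i j * (u i * v j - v i * u j) := by
      rw [hD2, Complex.im_sum]
      refine Finset.sum_congr rfl fun i _ => ?_
      rw [Complex.im_sum]
      refine Finset.sum_congr rfl fun j _ => ?_
      simp only [Complex.mul_re, Complex.mul_im, Complex.ofReal_re, Complex.ofReal_im,
        Complex.conj_re, Complex.conj_im, hu, hv]
      ring
    rw [h1]
    have h2 : ∑ i, ∑ j, M i j * (u i * v j) = ∑ i, ∑ j, M i j * (v i * u j) := by
      rw [Finset.sum_comm]
      refine Finset.sum_congr rfl fun i _ => Finset.sum_congr rfl fun j _ => by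
        rw [hsym i j]; ring
    simp only [mul_sub, Finset.sum_sub_distrib]
    rw [h2]; ring
  have hDre0 : 0 ≤ D.re := by
    have h1 := hpsd.dotProduct_mulVec_nonneg u
    have h2 := hpsd.dotProduct_mulVec_nonneg v
    simp only [dotProduct, mulVec, star_trivial, Finset.mul_sum] at h1 h2
    rw [hDre]
    have e1 : ∑ i, ∑ j, M i j * (u i * u j) = ∑ i, ∑ j, u i * (M i j * u j) :=
      Finset.sum_congr rfl fun i _ => Finset.sum_congr rfl fun j _ => by ring
    have e2 : ∑ i, ∑ j, M i j * (v i * v j) = ∑ i, ∑ j, v i * (M i j * v j) :=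
      Finset.sum_congr rfl fun i _ => Finset.sum_congr rfl fun j _ => by ring
    rw [e1, e2]
    exact add_nonneg h1 h2
  have hlim : l.im = 0 := by
    have h := congrArg Complex.im hD1
    rw [hDim] at h
    simp only [Complex.mul_im, Complex.ofReal_re, Complex.ofReal_im, mul_zero, add_zero] at h
    have h' : l.im * N = 0 := by linarith
    rcases mul_eq_zero.1 h' with h'' | h''
    · exact h''
    · exact absurd h'' (ne_of_gt hNpos)
  have hlre : 0 ≤ l.re := by
    have h := congrArg Complex.re hD1
    rw [h] at hDre0
    simp only [Complex.mul_re, Complex.ofReal_re, Complex.ofReal_im, mul_zero, sub_zero] at hDre0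
    nlinarith [hDre0, hNpos]
  obtain ⟨i0, -, hmax⟩ := Finset.exists_max_image Finset.univ (fun i => ‖x i‖)
    ⟨i1, Finset.mem_univ i1⟩
  have hxi0 : 0 < ‖x i0‖ := by
    have := hmax i1 (Finset.mem_univ i1)
    have h1 : 0 < ‖x i1‖ := by simpa [norm_pos_iff] using hi1
    linarith
  have heq : ∑ j, (M i0 j : ℂ) * x j = l * x i0 := by
    have := congrFun hev i0
    simpa [mulVec, dotProduct, Matrix.map_apply] using this
  have habs : ‖l‖ * ‖x i0‖ ≤ C * ‖x i0‖ := by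
    calc ‖l‖ * ‖x i0‖ = ‖l * x i0‖ :=
        (norm_mul _ _).symm
    _ = ‖∑ j, (M i0 j : ℂ) * x j‖ := by rw [heq]
    _ ≤ ∑ j, ‖(M i0 j : ℂ) * x j‖ := norm_sum_le _ _
    _ = ∑ j, |M i0 j| * ‖x j‖ := by
        refine Finset.sum_congr rfl fun j _ => ?_
        rw [norm_mul, Complex.norm_real, Real.norm_eq_abs]
    _ ≤ ∑ j, |M i0 j| * ‖x i0‖ := by
        refine Finset.sum_le_sum fun j _ => ?_
        exact mul_le_mul_of_nonneg_left (hmax j (Finset.mem_univ j)) (abs_nonneg _)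
    _ = (∑ j, |M i0 j|) * ‖x i0‖ := by rw [Finset.sum_mul]
    _ ≤ C * ‖x i0‖ := mul_le_mul_of_nonneg_right (hrow i0) (norm_nonneg _)
  have hlabs : ‖l‖ ≤ C := le_of_mul_le_mul_right habs hxi0
  refine ⟨l.re, ?_, hlre, ?_⟩
  · exact Complex.ext rfl (by simp [hlim])
  · calc l.re ≤ |l.re| := le_abs_self _
    _ ≤ ‖l‖ := Complex.abs_re_le_norm l
    _ ≤ C := hlabs

lemma platoon_degree_le (n k : ℕ) (i : Fin n) : (platoon n k).degree i ≤ 2 * k := by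
  classical
  rw [SimpleGraph.degree]
  have hsub : ∀ j ∈ (platoon n k).neighborFinset i,
      (j : ℤ) ∈ (Finset.Icc ((i : ℤ) - k) ((i : ℤ) + k)).erase (i : ℤ) := by
    intro j hj
    rw [SimpleGraph.mem_neighborFinset] at hj
    obtain ⟨hne, hd⟩ := (hj : i ≠ j ∧ ((i : ℤ) - (j : ℤ)).natAbs ≤ k)
    rw [Finset.mem_erase, Finset.mem_Icc]
    have : (i : Fin n) ≠ j → (i : ℤ) ≠ (j : ℤ) := by
      intro h h'
      exact h (Fin.ext (by exact_mod_cast h'))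
    refine ⟨fun h => this hne h.symm, by omega, by omega⟩
  have hinj : Set.InjOn (fun j : Fin n => (j : ℤ)) ((platoon n k).neighborFinset i) := by
    intro a _ b _ hab
    simp only at hab
    exact Fin.ext (by exact_mod_cast hab)
  have hcard := Finset.card_le_card_of_injOn _ hsub hinj
  have hicc : ((Finset.Icc ((i : ℤ) - k) ((i : ℤ) + k)).erase (i : ℤ)).card = 2 * k := by
    rw [Finset.card_erase_of_mem (by rw [Finset.mem_Icc]; omega)]
    rw [Int.card_Icc]
    omega
  omega

lemma lap_row_sum (n k : ℕ) (i : Fin n) :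
    ∑ j : Fin n, |(platoon n k).lapMatrix ℝ i j| ≤ 4 * k := by
  classical
  have hentry : ∀ j, |(platoon n k).lapMatrix ℝ i j| =
      (if i = j then ((platoon n k).degree i : ℝ) else 0)
      + (if (platoon n k).Adj i j then 1 else 0) := by
    intro j
    rw [SimpleGraph.lapMatrix, Matrix.sub_apply, SimpleGraph.degMatrix,
      Matrix.diagonal_apply, SimpleGraph.adjMatrix_apply]
    rcases eq_or_ne i j with rfl | hij
    · simp [(platoon n k).loopless.irrefl i]
    · simp [hij]
      split <;> simp
  calc ∑ j : Fin n, |(platoon n k).lapMatrix ℝ i j|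
      = ∑ j : Fin n, ((if i = j then ((platoon n k).degree i : ℝ) else 0)
        + (if (platoon n k).Adj i j then 1 else 0)) := Finset.sum_congr rfl fun j _ => hentry j
    _ = ((platoon n k).degree i : ℝ) + ((platoon n k).degree i : ℝ) := by
        rw [Finset.sum_add_distrib, Finset.sum_ite_eq (Finset.univ) i
          (fun _ => ((platoon n k).degree i : ℝ))]
        rw [← SimpleGraph.degree_eq_sum_if_adj]
        simp
    _ ≤ 2 * k + 2 * k := by
        have := platoon_degree_le n k i
        have h' : ((platoon n k).degree i : ℝ) ≤ 2 * k := by exact_mod_cast this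
        linarith
    _ = 4 * k := by ring

open Matrix in
lemma formation_mulVec0 {F : Type*} [Fintype F] [DecidableEq F]
    (Lg : Matrix F F ℝ) (v : F × Fin 2 → ℂ) (i : F) :
    (((formationMatrix Lg).map Complex.ofReal) *ᵥ v) (i, 0) = v (i, 1) := by
  simp only [formationMatrix, Matrix.mulVec, dotProduct, Fintype.sum_prod_type,
    Fin.sum_univ_two, Matrix.map_apply, Matrix.add_apply, Matrix.kroneckerMap_apply,
    Matrix.one_apply, Matrix.cons_val', Matrix.cons_val_zero, Matrix.cons_val_one,
    Matrix.head_cons, Matrix.empty_val', Matrix.cons_val_fin_one, Matrix.head_fin_const]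
  push_cast
  simp [Finset.sum_ite_eq, apply_ite]

open Matrix in
lemma formation_mulVec1 {F : Type*} [Fintype F] [DecidableEq F]
    (Lg : Matrix F F ℝ) (v : F × Fin 2 → ℂ) (i : F) :
    (((formationMatrix Lg).map Complex.ofReal) *ᵥ v) (i, 1)
      = -∑ j, (Lg i j : ℂ) * (v (j, 0) + v (j, 1)) := by
  simp only [formationMatrix, Matrix.mulVec, dotProduct, Fintype.sum_prod_type,
    Fin.sum_univ_two, Matrix.map_apply, Matrix.add_apply, Matrix.kroneckerMap_apply,
    Matrix.one_apply, Matrix.cons_val', Matrix.cons_val_zero, Matrix.cons_val_one,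
    Matrix.head_cons, Matrix.empty_val', Matrix.cons_val_fin_one, Matrix.head_fin_const]
  norm_num
  rw [← Finset.sum_neg_distrib]
  refine Finset.sum_congr rfl fun j _ => by ring

/-- for the platoon `P(n,k)` with grounded Laplacian `L_g` and network
formation matrix `B`, every complex eigenvalue `μ` of `B` satisfies `|μ| ≤ 4k` (the spectral
radius of `B` is at most `4k`); consequently, for every delay `0 ≤ τ < 1/(4k)` one has
`τ·|μ| < 1` for every eigenvalue `μ` of `B`. -/
theorem platoon_formation_spectral_radius (n k : ℕ) (hn : 1 ≤ n) (hk : 1 ≤ k)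
    (S : Finset (Fin n)) (hS : S.Nonempty) (hF : Sᶜ.Nonempty) :
    (∀ μ ∈ spectrum ℂ
        ((formationMatrix (groundedLaplacian (platoon n k) S)).map Complex.ofReal),
      ‖μ‖ ≤ 4 * k) ∧
    (∀ τ : ℝ, 0 ≤ τ → τ < 1 / (4 * k) →
      ∀ μ ∈ spectrum ℂ
          ((formationMatrix (groundedLaplacian (platoon n k) S)).map Complex.ofReal),
        τ * ‖μ‖ < 1) := by
  classical
  set Lg := groundedLaplacian (platoon n k) S with hLg
  -- symmetry of the grounded Laplacian
  have hsym : ∀ i j, Lg j i = Lg i j := by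
    intro i j
    have h := (platoon n k).isSymm_lapMatrix (R := ℝ)
    have := h.apply (i : Fin n) (j : Fin n)
    simpa [hLg, groundedLaplacian, Matrix.submatrix_apply] using this
  -- positive semidefiniteness
  have hpsd : Lg.PosSemidef := by
    have := (SimpleGraph.posSemidef_lapMatrix ℝ (platoon n k)).submatrix
      (fun i : {v : Fin n // v ∉ S} => (i : Fin n))
    simpa [hLg, groundedLaplacian] using this
  -- row sums bounded by 4k
  have hrow : ∀ i, ∑ j, |Lg i j| ≤ (4 * k : ℝ) := by
    intro i
    have h1 : ∑ j : {v : Fin n // v ∉ S}, |Lg i j|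
        = ∑ j ∈ Finset.univ.map (Function.Embedding.subtype (fun v : Fin n => v ∉ S)),
            |(platoon n k).lapMatrix ℝ (i : Fin n) j| := by
      rw [Finset.sum_map]
      rfl
    rw [h1]
    calc ∑ j ∈ Finset.univ.map (Function.Embedding.subtype (fun v : Fin n => v ∉ S)),
          |(platoon n k).lapMatrix ℝ (i : Fin n) j|
        ≤ ∑ j : Fin n, |(platoon n k).lapMatrix ℝ (i : Fin n) j| :=
          Finset.sum_le_sum_of_subset_of_nonneg (Finset.subset_univ _)
            (fun j _ _ => abs_nonneg _)
      _ ≤ 4 * k := lap_row_sum n k (i : Fin n)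
  have key : ∀ μ ∈ spectrum ℂ ((formationMatrix Lg).map Complex.ofReal),
      ‖μ‖ ≤ 4 * k := by
    intro μ hμ
    obtain ⟨v, hv, hev⟩ := exists_eigvec _ μ hμ
    have h0 : ∀ i, v (i, 1) = μ * v (i, 0) := by
      intro i
      have h := formation_mulVec0 Lg v i
      rw [hev] at h
      simpa using h.symm
    set x : {v : Fin n // v ∉ S} → ℂ := fun i => v (i, 0) with hxdef
    have hLx : ∀ i, (1 + μ) * ∑ j, (Lg i j : ℂ) * x j = -μ^2 * x i := by
      intro i
      have h := formation_mulVec1 Lg v i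
      rw [hev] at h
      simp only [Pi.smul_apply, smul_eq_mul] at h
      rw [h0 i] at h
      have e : ∑ j, (Lg i j : ℂ) * (v (j, 0) + v (j, 1))
          = (1 + μ) * ∑ j, (Lg i j : ℂ) * x j := by
        rw [Finset.mul_sum]
        refine Finset.sum_congr rfl fun j _ => ?_
        rw [h0 j]
        simp only [hxdef]
        ring
      rw [e] at h
      linear_combination h
    have hx : x ≠ 0 := by
      intro h
      apply hv
      have hvz : ∀ (i : {v : Fin n // v ∉ S}) (a : Fin 2), v (i, a) = 0 := by
        intro i a
        have hx0 : v (i, 0) = 0 := by simpa using congrFun h i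
        fin_cases a
        · exact hx0
        · show v (i, 1) = 0
          rw [h0 i, hx0, mul_zero]
      funext p
      obtain ⟨i, a⟩ := p
      exact hvz i a
    have hμne : (1 : ℂ) + μ ≠ 0 := by
      intro hcon
      apply hx
      funext i
      have h := hLx i
      rw [hcon, zero_mul] at h
      have hμ1 : μ = -1 := by linear_combination hcon
      rw [hμ1] at h
      have : x i = 0 := by
        have h' := h.symm
        simp at h'
        exact h'
      simpa using this
    set lam : ℂ := -μ^2 / (1 + μ) with hlam
    have heig : (Lg.map Complex.ofReal) *ᵥ x = lam • x := by
      funext i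
      have hcomp : ((Lg.map Complex.ofReal) *ᵥ x) i = ∑ j, (Lg i j : ℂ) * x j := by
        simp [Matrix.mulVec, dotProduct, Matrix.map_apply]
      rw [hcomp]
      simp only [Pi.smul_apply, smul_eq_mul, hlam]
      rw [div_mul_eq_mul_div, eq_div_iff hμne]
      linear_combination (hLx i)
    obtain ⟨r, hr, hr0, hrC⟩ := real_psd_eig Lg hsym hpsd (4 * k) hrow lam x hx heig
    have hlameq : lam * (1 + μ) = -μ^2 := by
      rw [hlam, div_mul_cancel₀ _ hμne]
    rw [hr] at hlameq
    have heq2 : μ^2 + (r : ℝ) * μ + (r : ℝ) = 0 := by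
      push_cast
      linear_combination hlameq
    have h4 : (4 : ℝ) ≤ 4 * k := by
      have : (1 : ℝ) ≤ k := by exact_mod_cast hk
      linarith
    have := scalar_bound (4 * k) r μ h4 hr0 hrC heq2
    exact this
  refine ⟨key, ?_⟩
  intro τ hτ0 hτ μ hμ
  have h4k : (0 : ℝ) < 4 * k := by
    have : (1 : ℝ) ≤ k := by exact_mod_cast hk
    linarith
  have h1 : τ * ‖μ‖ ≤ τ * (4 * k) :=
    mul_le_mul_of_nonneg_left (key μ hμ) hτ0
  have h2 : τ * (4 * k) < 1 := by
    rw [lt_div_iff₀ h4k] at hτ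
    linarith
  linarith
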